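/- Let X be a well-ordered set equipped with the order topology. Then the map sending each nonempty closed subset b of X to its minimum min(b) is continuous from the hyperspace of nonempty closed subsets with the Vietoris topology to X. Moreover, for every nonempty closed b, the set b \ {min b} is closed in X. -/

import Mathlib

open TopologicalSpace Set

/-- The Vietoris topology on the hyperspace of closed subsets, generated by the sets
`□U = {a | ↑a ⊆ U}` and `◇U = {a | (↑a ∩ U).Nonempty}` for `U` open. -/
instance vietoris (X : Type*) [TopologicalSpace X] : TopologicalSpace (Closeds X) :=
  generateFrom
    ({s | ∃ U : Set X, IsOpen U ∧ s = {a : Closeds X | (a : Set X) ⊆ U}} ∪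
     {s | ∃ U : Set X, IsOpen U ∧ s = {a : Closeds X | ((a : Set X) ∩ U).Nonempty}})

theorem min_continuous_on_ne_closeds {X : Type*} [LinearOrder X] [TopologicalSpace X]
    [OrderTopology X] [WellFoundedLT X] :
    Continuous (fun a : {a : Closeds X // (a.1 : Set X).Nonempty} =>
      (IsWellFounded.wf (r := ((· < ·) : X → X → Prop))).min (a.1 : Set X) a.2) ∧
    ∀ a : {a : Closeds X // (a.1 : Set X).Nonempty},
      IsClosed ((a.1 : Set X) \
        {(IsWellFounded.wf (r := ((· < ·) : X → X → Prop))).min (a.1 : Set X) a.2}) := by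
  set wf := (IsWellFounded.wf (r := ((· < ·) : X → X → Prop))) with hwf
  constructor
  · have key : @Continuous _ _ _ (generateFrom {s : Set X | ∃ a, s = Ioi a ∨ s = Iio a})
        (fun a : {a : Closeds X // (a.1 : Set X).Nonempty} =>
          wf.min (a.1 : Set X) a.2) := by
      refine continuous_generateFrom_iff.mpr ?_
      rintro s ⟨c, rfl | rfl⟩
      · have h : (fun a : {a : Closeds X // (a.1 : Set X).Nonempty} =>
            wf.min (a.1 : Set X) a.2) ⁻¹' Ioi c
            = Subtype.val ⁻¹' {a : Closeds X | (a : Set X) ⊆ Ioi c} := by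
          ext a
          simp only [mem_preimage, mem_Ioi, mem_setOf_eq]
          constructor
          · intro h x hx
            exact lt_of_lt_of_le h (not_lt.mp (wf.not_lt_min _ hx))
          · intro h
            exact h (wf.min_mem _ a.2)
        rw [h]
        exact isOpen_induced (isOpen_generateFrom_of_mem
          (Or.inl ⟨Ioi c, isOpen_Ioi, rfl⟩))
      · have h : (fun a : {a : Closeds X // (a.1 : Set X).Nonempty} =>
            wf.min (a.1 : Set X) a.2) ⁻¹' Iio c
            = Subtype.val ⁻¹' {a : Closeds X | ((a : Set X) ∩ Iio c).Nonempty} := by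
          ext a
          simp only [mem_preimage, mem_Iio, mem_setOf_eq]
          constructor
          · intro h
            exact ⟨wf.min _ a.2, wf.min_mem _ a.2, h⟩
          · rintro ⟨x, hxa, hxc⟩
            exact lt_of_le_of_lt (not_lt.mp (wf.not_lt_min _ hxa)) hxc
        rw [h]
        exact isOpen_induced (isOpen_generateFrom_of_mem
          (Or.inr ⟨Iio c, isOpen_Iio, rfl⟩))
    have ht : ‹TopologicalSpace X› = generateFrom {s : Set X | ∃ a, s = Ioi a ∨ s = Iio a} :=
      OrderTopology.topology_eq_generate_intervals
    rwa [← ht] at key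
  · intro a
    set m := wf.min (a.1 : Set X) a.2 with hm
    by_cases h : ((a.1 : Set X) \ {m}).Nonempty
    · set m' := wf.min _ h with hm'
      have hmm' : m < m' :=
        lt_of_le_of_ne (not_lt.mp (wf.not_lt_min _ (wf.min_mem _ h).1))
          (fun e => (wf.min_mem _ h).2 e.symm)
      have he : (a.1 : Set X) \ {m} = (a.1 : Set X) ∩ Ici m' := by
        ext x
        constructor
        · intro hx
          exact ⟨hx.1, not_lt.mp (wf.not_lt_min _ hx)⟩
        · rintro ⟨hxa, hxm'⟩
          refine ⟨hxa, fun hxm => ?_⟩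
          rw [mem_singleton_iff] at hxm
          exact absurd (hxm ▸ hxm') (not_le.mpr hmm')
      rw [he]
      exact a.1.isClosed.inter isClosed_Ici
    · rw [not_nonempty_iff_eq_empty.mp h]
      exact isClosed_empty
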